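/- Given a semi-component module S over a finite poset P with a chosen semi-component basis, its component extension C (obtained by adding one dimension to every S(p) and extending each matrix by a new first row and column: the new column is (1,0,...,0)ᵀ, and the new first row has 1 in each column of the original matrix that was zero, 0 otherwise) is a component module, and C is isomorphic to S ⊕ I where I is the interval module supported on all of P. -/
import Mathlib


section

variable {K : Type*} [Field K]

/-- A matrix is a component matrix if all entries are `0` or `1` and every
column contains exactly one `1`. -/
def IsComponentMatrix {ι κ : Type*} (A : Matrix ι κ K) : Prop :=
  (∀ i j, A i j = 0 ∨ A i j = 1) ∧ ∀ j, ∃! i, A i j = 1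

/-- A matrix is a semi-component matrix if all entries are `0` or `1` and every
column contains at most one `1`. -/
def IsSemiComponentMatrix {ι κ : Type*} (A : Matrix ι κ K) : Prop :=
  (∀ i j, A i j = 0 ∨ A i j = 1) ∧ ∀ j i i', A i j = 1 → A i' j = 1 → i = i'

open Classical in
/-- The component extension of a matrix: add a new first row and first column;
the new column is `(1,0,…,0)ᵀ`, and the new first row has a `1` exactly in the
columns of the original matrix that were zero. -/
noncomputable def extendMatrix {m n : ℕ} (A : Matrix (Fin m) (Fin n) K) :
    Matrix (Fin (m + 1)) (Fin (n + 1)) K :=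
  Matrix.of fun i j =>
    Fin.cases
      (Fin.cases (1 : K) (fun j' => if ∀ i', A i' j' = 0 then 1 else 0) j)
      (fun i' => Fin.cases (0 : K) (fun j' => A i' j') j) i

end

section

variable {K : Type*} [Field K]

open Classical

variable {m n : ℕ} (A : Matrix (Fin m) (Fin n) K)

@[simp] lemma extendMatrix_zero_zero : extendMatrix A 0 0 = 1 := by
  simp [extendMatrix]

@[simp] lemma extendMatrix_zero_succ (j : Fin n) :
    extendMatrix A 0 j.succ = if ∀ i', A i' j = 0 then 1 else 0 := by
  simp [extendMatrix]

@[simp] lemma extendMatrix_succ_zero (i : Fin m) : extendMatrix A i.succ 0 = 0 := by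
  simp [extendMatrix]

@[simp] lemma extendMatrix_succ_succ (i : Fin m) (j : Fin n) :
    extendMatrix A i.succ j.succ = A i j := by
  simp [extendMatrix]

lemma semi_col (hA : IsSemiComponentMatrix A) (j : Fin n) :
    (∀ i, A i j = 0) ∨ ∃ i0, A i0 j = 1 ∧ ∀ i, i ≠ i0 → A i j = 0 := by
  by_cases h : ∀ i, A i j = 0
  · exact Or.inl h
  · push_neg at h
    obtain ⟨i0, hi0⟩ := h
    rcases hA.1 i0 j with h0 | h1
    · exact absurd h0 hi0
    · refine Or.inr ⟨i0, h1, fun i hi => ?_⟩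
      rcases hA.1 i j with h0 | h1'
      · exact h0
      · exact absurd (hA.2 j i i0 h1' h1) hi

lemma semi_colsum (hA : IsSemiComponentMatrix A) (j : Fin n) :
    (if ∀ i', A i' j = 0 then 1 else 0) + ∑ i, A i j = 1 := by
  rcases semi_col A hA j with h | ⟨i0, h1, h0⟩
  · rw [if_pos h, Finset.sum_eq_zero (fun i _ => h i), add_zero]
  · rw [if_neg (fun hall => one_ne_zero (h1 ▸ hall i0)), zero_add,
      Finset.sum_eq_single i0 (fun i _ hi => h0 i hi) (by simp), h1]

lemma extend_one : extendMatrix (1 : Matrix (Fin m) (Fin m) K) = 1 := by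
  ext i j
  rcases Fin.eq_zero_or_eq_succ i with rfl | ⟨i', rfl⟩ <;>
    rcases Fin.eq_zero_or_eq_succ j with rfl | ⟨j', rfl⟩
  · simp
  · have hne : ¬ ∀ i' : Fin m, (1 : Matrix (Fin m) (Fin m) K) i' j' = 0 :=
      fun h => by simpa using h j'
    rw [extendMatrix_zero_succ, if_neg hne]
    simp [Matrix.one_apply, (Fin.succ_ne_zero j').symm]
  · simp [Matrix.one_apply, Fin.succ_ne_zero i']
  · simp [Matrix.one_apply, Fin.succ_inj]

lemma extend_mul {k : ℕ} (B : Matrix (Fin k) (Fin m) K)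
    (hA : IsSemiComponentMatrix A) :
    extendMatrix B * extendMatrix A = extendMatrix (B * A) := by
  ext i j
  rw [Matrix.mul_apply, Fin.sum_univ_succ]
  refine Fin.cases ?_ (fun i' => ?_) i <;> refine Fin.cases ?_ (fun j' => ?_) j
  · simp
  · simp only [extendMatrix_zero_zero, extendMatrix_zero_succ,
      extendMatrix_succ_succ, one_mul]
    rcases semi_col A hA j' with h | ⟨k0, h1, h0⟩
    · rw [if_pos h, if_pos (fun i => by
        rw [Matrix.mul_apply]
        exact Finset.sum_eq_zero fun x _ => by rw [h x, mul_zero])]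
      simp [h]
    · have hne : ¬ ∀ i, A i j' = 0 := fun hall => one_ne_zero (h1 ▸ hall k0)
      have hBA : ∀ i, (B * A) i j' = B i k0 := fun i => by
        rw [Matrix.mul_apply,
          Finset.sum_eq_single k0 (fun x _ hx => by rw [h0 x hx, mul_zero]) (by simp),
          h1, mul_one]
      rw [if_neg hne, zero_add,
        Finset.sum_eq_single k0 (fun x _ hx => by rw [h0 x hx, mul_zero]) (by simp),
        h1, mul_one]
      exact (if_congr (forall_congr' fun i => by rw [hBA i]) rfl rfl).symm
  · simp
  · simp [Matrix.mul_apply]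

lemma extend_component (hA : IsSemiComponentMatrix A) :
    IsComponentMatrix (extendMatrix A) := by
  constructor
  · intro i j
    refine Fin.cases ?_ (fun i' => ?_) i <;> refine Fin.cases ?_ (fun j' => ?_) j
    · simp
    · rw [extendMatrix_zero_succ]; split_ifs <;> simp
    · simp
    · rw [extendMatrix_succ_succ]; exact hA.1 i' j'
  · intro j
    rcases Fin.eq_zero_or_eq_succ j with rfl | ⟨j', rfl⟩
    · refine ⟨0, by simp, fun i hi => ?_⟩
      rcases Fin.eq_zero_or_eq_succ i with rfl | ⟨i', rfl⟩
      · rfl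
      · exact absurd hi (by simp)
    · rcases semi_col A hA j' with h | ⟨k0, h1, h0⟩
      · refine ⟨0, by show extendMatrix A 0 j'.succ = 1; rw [extendMatrix_zero_succ, if_pos h], fun i hi => ?_⟩
        rcases Fin.eq_zero_or_eq_succ i with rfl | ⟨i', rfl⟩
        · rfl
        · rw [extendMatrix_succ_succ, h i'] at hi
          exact absurd hi zero_ne_one
      · have hne : ¬ ∀ i, A i j' = 0 := fun hall => one_ne_zero (h1 ▸ hall k0)
        refine ⟨k0.succ, by show extendMatrix A k0.succ j'.succ = 1; rw [extendMatrix_succ_succ, h1], fun i hi => ?_⟩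
        rcases Fin.eq_zero_or_eq_succ i with rfl | ⟨i', rfl⟩
        · rw [extendMatrix_zero_succ, if_neg hne] at hi
          exact absurd hi zero_ne_one
        · rw [extendMatrix_succ_succ] at hi
          by_contra hne'
          exact zero_ne_one ((h0 i' (fun e => hne' (by rw [e]))) ▸ hi)

noncomputable def splitEquiv (K : Type*) [Field K] (n : ℕ) :
    (Fin (n + 1) → K) ≃ₗ[K] (Fin n → K) × K where
  toFun v := (v ∘ Fin.succ, ∑ i, v i)
  map_add' u v := by
    ext <;> simp [Finset.sum_add_distrib]
  map_smul' c v := by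
    ext <;> simp [Finset.mul_sum]
  invFun wc := Fin.cases (wc.2 - ∑ i, wc.1 i) wc.1
  left_inv v := by
    funext i
    refine Fin.cases ?_ (fun i' => ?_) i
    · simp [Fin.sum_univ_succ]
    · simp
  right_inv wc := by
    refine Prod.ext (funext fun i => ?_) ?_
    · simp
    · simp [Fin.sum_univ_succ]

@[simp] lemma splitEquiv_apply (v : Fin (n + 1) → K) :
    splitEquiv K n v = (v ∘ Fin.succ, ∑ i, v i) := rfl

lemma split_natural (hA : IsSemiComponentMatrix A) (v : Fin (n + 1) → K) :
    splitEquiv K m ((extendMatrix A).mulVec v) =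
      (A.mulVec ((splitEquiv K n v).1), (splitEquiv K n v).2) := by
  have h2 : ∀ i : Fin m, (extendMatrix A).mulVec v i.succ
      = A.mulVec (v ∘ Fin.succ) i := by
    intro i
    simp [Matrix.mulVec, dotProduct, Fin.sum_univ_succ]
  refine Prod.ext (funext fun i => h2 i) ?_
  show ∑ i, (extendMatrix A).mulVec v i = ∑ i, v i
  rw [Fin.sum_univ_succ, Fin.sum_univ_succ (f := v)]
  simp only [h2]
  have h0 : (extendMatrix A).mulVec v 0
      = v 0 + ∑ j, (if ∀ i', A i' j = 0 then (1:K) else 0) * v j.succ := by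
    simp [Matrix.mulVec, dotProduct, Fin.sum_univ_succ]
  have h3 : ∑ i, A.mulVec (v ∘ Fin.succ) i = ∑ j, (∑ i, A i j) * v j.succ := by
    calc ∑ i, A.mulVec (v ∘ Fin.succ) i = ∑ i, ∑ j, A i j * v j.succ := by
          simp [Matrix.mulVec, dotProduct]
      _ = ∑ j, ∑ i, A i j * v j.succ := Finset.sum_comm
      _ = ∑ j, (∑ i, A i j) * v j.succ := by simp [Finset.sum_mul]
  rw [h0, h3, add_assoc, ← Finset.sum_add_distrib]
  congr 1
  refine Finset.sum_congr rfl fun j _ => ?_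
  rw [← add_mul, semi_colsum A hA j, one_mul]

end

/-- Given a semi-component module `S` over a finite poset `P` (structure maps
given by semi-component matrices `A`), its component extension `C` (with
structure maps the extended matrices) is a component module, is functorial, and
is isomorphic to `S ⊕ I`, where `I` is the interval module supported on all of
`P` (the summand `K` with identity maps). -/
theorem stmt_17 (K : Type*) [Field K] (P : Type*) [PartialOrder P] [Fintype P]
    (d : P → ℕ) (A : ∀ p q : P, p ≤ q → Matrix (Fin (d q)) (Fin (d p)) K)
    (hid : ∀ p : P, A p p le_rfl = 1)
    (hcomp : ∀ (p q r : P) (hpq : p ≤ q) (hqr : q ≤ r),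
      A q r hqr * A p q hpq = A p r (hpq.trans hqr))
    (hsemi : ∀ (p q : P) (h : p ≤ q), IsSemiComponentMatrix (A p q h)) :
    -- the extension is functorial
    (∀ p : P, extendMatrix (A p p le_rfl) = 1) ∧
    (∀ (p q r : P) (hpq : p ≤ q) (hqr : q ≤ r),
      extendMatrix (A q r hqr) * extendMatrix (A p q hpq) =
        extendMatrix (A p r (hpq.trans hqr))) ∧
    -- the extension is a component module
    (∀ (p q : P) (h : p ≤ q), IsComponentMatrix (extendMatrix (A p q h))) ∧
    -- the extension is isomorphic to `S ⊕ I`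
    (∃ e : ∀ p : P, (Fin (d p + 1) → K) ≃ₗ[K] ((Fin (d p) → K) × K),
      ∀ (p q : P) (h : p ≤ q) (v : Fin (d p + 1) → K),
        e q ((extendMatrix (A p q h)).mulVec v) =
          ((A p q h).mulVec (e p v).1, (e p v).2)) := by
  refine ⟨fun p => by rw [hid p]; exact extend_one,
    fun p q r hpq hqr => by
      rw [extend_mul _ _ (hsemi p q hpq), hcomp],
    fun p q h => extend_component _ (hsemi p q h),
    ⟨fun p => splitEquiv K (d p), fun p q h v => split_natural _ (hsemi p q h) v⟩⟩
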